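/- Abel's binomial identity: for all real numbers a, b and every m ∈ ℕ, Σ_{i=0}^{m} C(m,i) · a · (a+i)^(i-1) · (b-i)^(m-i) = (a+b)^m, where for i such that a+i = 0 the term a·(a+i)^(i-1) is interpreted appropriately (e.g., for a ≠ 0, -1, ..., -m). -/

import Mathlib

/-- Abel's binomial identity: for real `a, b` with `a ∉ {0, -1, ..., -m}`,
`Σ_{i=0}^{m} C(m,i) · a · (a+i)^(i-1) · (b-i)^(m-i) = (a+b)^m`,
where `(a+i)^(i-1)` is a real `zpow` (so the `i = 0` term is `a · a⁻¹ · b^m = b^m`). -/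

lemma abel_findiff : ∀ n m : ℕ, m < n → ∀ x : ℝ,
    ∑ i ∈ Finset.range (n + 1), (-1 : ℝ) ^ (n - i) * (n.choose i) * (x + i) ^ m = 0 := by
  intro n
  induction n with
  | zero => intro m hm; omega
  | succ n ih =>
    intro m hm x
    have key : ∑ i ∈ Finset.range (n + 2), (-1 : ℝ) ^ (n + 1 - i) * ((n+1).choose i) * (x + i) ^ m
        = ∑ i ∈ Finset.range (n + 1), (-1 : ℝ) ^ (n - i) * (n.choose i) *
            ((x + 1 + i) ^ m - (x + i) ^ m) := by
      rw [Finset.sum_range_succ' (fun i => (-1 : ℝ) ^ (n + 1 - i) * ((n+1).choose i) * (x + i) ^ m)]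
      have hT : ∑ i ∈ Finset.range (n + 2), (-1 : ℝ) ^ (n + 1 - i) * (n.choose i) * (x + i) ^ m
          = - ∑ i ∈ Finset.range (n + 1), (-1 : ℝ) ^ (n - i) * (n.choose i) * (x + i) ^ m := by
        rw [Finset.sum_range_succ, Nat.choose_succ_self]
        push_cast
        rw [mul_zero, zero_mul, add_zero, ← Finset.sum_neg_distrib]
        apply Finset.sum_congr rfl
        intro i hi
        simp only [Finset.mem_range] at hi
        have : n + 1 - i = (n - i) + 1 := by omega
        rw [this, pow_succ]
        ring
      rw [Finset.sum_range_succ' (fun i => (-1 : ℝ) ^ (n + 1 - i) * (n.choose i) * (x + i) ^ m)] at hT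
      have expand : ∀ i ∈ Finset.range (n + 1),
          (-1 : ℝ) ^ (n + 1 - (i+1)) * ((n+1).choose (i+1)) * (x + (i+1 : ℕ)) ^ m
          = (-1 : ℝ) ^ (n - i) * (n.choose i) * (x + 1 + i) ^ m
            + (-1 : ℝ) ^ (n + 1 - (i+1)) * (n.choose (i+1)) * (x + (i+1 : ℕ)) ^ m := by
        intro i hi
        rw [Nat.choose_succ_succ]
        have h1 : n + 1 - (i + 1) = n - i := by omega
        have h2 : (x + (i + 1 : ℕ)) = x + 1 + i := by push_cast; ring
        rw [h1, h2]
        push_cast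
        ring
      rw [Finset.sum_congr rfl expand, Finset.sum_add_distrib]
      have hlast : ((-1 : ℝ) ^ (n + 1 - 0) * ((n+1).choose 0) * (x + (0:ℕ)) ^ m)
          = (-1 : ℝ) ^ (n + 1 - 0) * ((n:ℕ).choose 0) * (x + (0:ℕ)) ^ m := by simp
      rw [add_assoc, hlast]
      rw [hT]; simp only [mul_sub, Finset.sum_sub_distrib]
      ring
    rw [key]
    have expand2 : ∀ i ∈ Finset.range (n + 1),
        (-1 : ℝ) ^ (n - i) * (n.choose i) * ((x + 1 + i) ^ m - (x + i) ^ m)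
        = ∑ k ∈ Finset.range m, (m.choose k : ℝ) * ((-1 : ℝ) ^ (n - i) * (n.choose i) * (x + i) ^ k) := by
      intro i hi
      have hb : (x + 1 + i) ^ m = ∑ k ∈ Finset.range (m+1), (x + i) ^ k * (1:ℝ) ^ (m - k) * m.choose k := by
        rw [← add_pow]; ring_nf
      rw [hb, Finset.sum_range_succ]
      simp only [one_pow, mul_one, Nat.choose_self, Nat.cast_one]
      rw [add_sub_cancel_right, Finset.mul_sum]
      exact Finset.sum_congr rfl (fun k hk => by ring)
    rw [Finset.sum_congr rfl expand2, Finset.sum_comm]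
    apply Finset.sum_eq_zero
    intro k hk
    simp only [Finset.mem_range] at hk
    rw [← Finset.mul_sum, ih k (by omega) x, mul_zero]

lemma abel_aux : ∀ m : ℕ, ∀ a : ℝ, (∀ i : ℕ, i ≤ m → a + i ≠ 0) → ∀ b : ℝ,
    ∑ i ∈ Finset.range (m + 1),
      (m.choose i : ℝ) * a * (a + i) ^ ((i : ℤ) - 1) * (b - i) ^ (m - i) = (a + b) ^ m := by
  intro m
  induction m with
  | zero =>
    intro a ha b
    have h0 : a ≠ 0 := by have := ha 0 le_rfl; simpa using this
    simp [zpow_neg, mul_inv_cancel₀ h0]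
  | succ m ih =>
    intro a ha b
    have ha' : ∀ i : ℕ, i ≤ m → a + i ≠ 0 := fun i hi => ha i (by omega)
    set c : ℕ → ℝ := fun i => (((m+1).choose i : ℕ) : ℝ) * a * (a + i) ^ ((i : ℤ) - 1) with hc
    set f : ℝ → ℝ := fun b => ∑ i ∈ Finset.range (m + 2), c i * (b - i) ^ (m + 1 - i) with hf
    set φ : ℝ → ℝ := fun b => f b - (a + b) ^ (m + 1) with hφ
    have hderiv : ∀ x : ℝ, HasDerivAt φ 0 x := by
      intro x
      have h1 : ∀ i ∈ Finset.range (m + 2),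
          HasDerivAt (fun b : ℝ => c i * (b - i) ^ (m + 1 - i))
            (c i * (((m + 1 - i : ℕ) : ℝ) * (x - i) ^ (m + 1 - i - 1) * 1)) x := by
        intro i _
        exact (((hasDerivAt_id x).sub_const (i : ℝ)).pow (m + 1 - i)).const_mul (c i)
      have hsum : HasDerivAt f
          (∑ i ∈ Finset.range (m + 2), c i * (((m + 1 - i : ℕ) : ℝ) * (x - i) ^ (m + 1 - i - 1) * 1)) x :=
        HasDerivAt.fun_sum h1
      have hg : HasDerivAt (fun b : ℝ => (a + b) ^ (m + 1))
          ((((m+1) : ℕ) : ℝ) * (a + x) ^ m * 1) x := by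
        have := ((hasDerivAt_id x).const_add a).fun_pow (m + 1)
        simpa using this
      have hval : (∑ i ∈ Finset.range (m + 2),
          c i * (((m + 1 - i : ℕ) : ℝ) * (x - i) ^ (m + 1 - i - 1) * 1))
          = (((m+1) : ℕ) : ℝ) * (a + x) ^ m * 1 := by
        rw [Finset.sum_range_succ]
        have hzero : c (m+1) * (((m + 1 - (m+1) : ℕ) : ℝ) * (x - ((m+1 : ℕ) : ℝ)) ^ (m + 1 - (m+1) - 1) * 1) = 0 := by
          simp
        rw [hzero, add_zero]
        have hterm : ∀ i ∈ Finset.range (m + 1),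
            c i * (((m + 1 - i : ℕ) : ℝ) * (x - i) ^ (m + 1 - i - 1) * 1)
            = (((m+1) : ℕ) : ℝ) * ((m.choose i : ℝ) * a * (a + i) ^ ((i : ℤ) - 1) * (x - i) ^ (m - i)) := by
          intro i hi
          simp only [Finset.mem_range] at hi
          have hch : (((m+1).choose i : ℕ) : ℝ) * ((m + 1 - i : ℕ) : ℝ) = ((m+1 : ℕ) : ℝ) * (m.choose i : ℝ) := by
            have h1 := Nat.choose_mul_succ_eq m i
            have h2 : (m+1).choose i * (m + 1 - i) = (m+1) * m.choose i := by
              rw [← h1, Nat.mul_comm]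
            exact_mod_cast congrArg (fun t : ℕ => (t : ℝ)) h2
          have he : m + 1 - i - 1 = m - i := by omega
          rw [he, hc]
          calc ((((m+1).choose i : ℕ) : ℝ) * a * (a + i) ^ ((i : ℤ) - 1)) *
                (((m + 1 - i : ℕ) : ℝ) * (x - i) ^ (m - i) * 1)
              = ((((m+1).choose i : ℕ) : ℝ) * ((m + 1 - i : ℕ) : ℝ)) *
                (a * (a + i) ^ ((i : ℤ) - 1) * (x - i) ^ (m - i)) := by ring
            _ = (((m+1 : ℕ) : ℝ) * (m.choose i : ℝ)) *
                (a * (a + i) ^ ((i : ℤ) - 1) * (x - i) ^ (m - i)) := by rw [hch]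
            _ = (((m+1) : ℕ) : ℝ) * ((m.choose i : ℝ) * a * (a + i) ^ ((i : ℤ) - 1) * (x - i) ^ (m - i)) := by
                ring
        rw [Finset.sum_congr rfl hterm, ← Finset.mul_sum, ih a ha' x]
        ring
      have := hsum.sub hg
      rw [hval, sub_self] at this
      exact this
    have hconst : φ b = φ (-a) := by
      have hdiff : Differentiable ℝ φ := fun x => (hderiv x).differentiableAt
      exact is_const_of_deriv_eq_zero hdiff (fun x => (hderiv x).deriv) b (-a)
    have hzero : φ (-a) = 0 := by
      have hfa : f (-a) = a * ∑ i ∈ Finset.range (m + 2),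
          (-1 : ℝ) ^ (m + 1 - i) * (((m+1).choose i : ℕ) : ℝ) * (a + i) ^ m := by
        rw [hf, Finset.mul_sum]
        apply Finset.sum_congr rfl
        intro i hi
        simp only [Finset.mem_range] at hi
        have hne : a + i ≠ 0 := ha i (by omega)
        have h1 : (-a - (i : ℝ)) = -(a + i) := by ring
        rw [hc, h1, neg_pow]
        have h2 : ((a : ℝ) + i) ^ ((i : ℤ) - 1) * (a + i) ^ (m + 1 - i)
            = (a + i) ^ m := by
          rw [← zpow_natCast (a + i) (m + 1 - i), ← zpow_add₀ hne, ← zpow_natCast (a + i) m]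
          congr 1
          have : ((m + 1 - i : ℕ) : ℤ) = (m : ℤ) + 1 - i := by
            have : i ≤ m + 1 := by omega
            push_cast [Nat.cast_sub this]
            ring
          rw [this]; ring
        calc (((m+1).choose i : ℕ) : ℝ) * a * (a + i) ^ ((i : ℤ) - 1) *
              ((-1 : ℝ) ^ (m + 1 - i) * (a + i) ^ (m + 1 - i))
            = a * ((-1 : ℝ) ^ (m + 1 - i) * (((m+1).choose i : ℕ) : ℝ) *
              ((a + i) ^ ((i : ℤ) - 1) * (a + i) ^ (m + 1 - i))) := by ring
          _ = a * ((-1 : ℝ) ^ (m + 1 - i) * (((m+1).choose i : ℕ) : ℝ) * (a + i) ^ m) := by rw [h2]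
      rw [hφ]
      simp only []
      rw [hfa, abel_findiff (m+1) m (by omega) a, mul_zero]
      have : (a + -a) = (0 : ℝ) := by ring
      rw [this, zero_pow (by omega)]
      ring
    have : φ b = 0 := hconst.trans hzero
    have hfb : f b = (a + b) ^ (m + 1) := by
      have h := this
      rw [hφ] at h
      simpa [sub_eq_zero] using h
    exact hfb

theorem stmt5 (m : ℕ) (a b : ℝ) (ha : ∀ i : ℕ, i ≤ m → a + i ≠ 0) :
    ∑ i ∈ Finset.range (m + 1),
      (m.choose i : ℝ) * a * (a + i) ^ ((i : ℤ) - 1) * (b - i) ^ (m - i) = (a + b) ^ m := by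
  exact abel_aux m a ha b
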